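/- Piecewise-constant approximation of the multi-slit vector field: let λ₁,…,λ_N : [0,T] → [0,1] be continuous with Σ_k λ_k(t) = 1 for all t, and V₁,…,V_N : [0,T] → [0,M] continuous. For m ∈ ℕ, define a piecewise continuous U_m : [0,T] → [0,M] by partitioning [0,T] into m intervals of length T/m and, on each interval I_i with right endpoint t_i, successively setting U_m equal to V₁,…,V_N on consecutive subintervals of I_i whose lengths are proportional to λ₁(t_i),…,λ_N(t_i). Then for every t ∈ [0,T], ∫_0^t 1/(z − U_m(s)) ds → ∫_0^t Σ_{k=1}^N λ_k(s)/(z − V_k(s)) ds locally uniformly in z ∈ ℍ as m → ∞. -/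

import Mathlib

set_option maxHeartbeats 1000000

open MeasureTheory Complex intervalIntegral

/-- The piecewise-constant-switching driving function `U_m`: partition `[0,T]`
into `m` intervals `I_i` of length `T/m` with right endpoints `t_i = iT/m`;
on each `I_i`, set `U_m = V_k` successively on consecutive subintervals of
lengths proportional to `λ_1(t_i), …, λ_N(t_i)`. -/
noncomputable def switchDriver (N : ℕ) (hN : N ≠ 0) (T : ℝ)
    (lam : Fin N → ℝ → ℝ) (Vf : Fin N → ℝ → ℝ) (m : ℕ) (s : ℝ) : ℝ :=
  let i : ℕ := max (Nat.ceil (s * m / T)) 1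
  let ti : ℝ := i * T / m
  let r : ℝ := s - ((i : ℝ) - 1) * T / m
  let S : Finset (Fin N) := Finset.univ.filter
    (fun k => r ≤ T / m * ∑ j ∈ Finset.univ.filter (fun j => j ≤ k), lam j ti)
  Vf (if h : S.Nonempty then S.min' h else ⟨0, Nat.pos_of_ne_zero hN⟩) s

lemma zsub_ne (z : ℂ) (δ : ℝ) (hδ : 0 < δ) (hz : δ ≤ z.im) (u : ℝ) : z - (u:ℂ) ≠ 0 := by
  intro h
  have h2 : (z - (u:ℂ)).im = 0 := by rw [h]; simp
  simp [Complex.sub_im] at h2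
  linarith

lemma ker_bound (z : ℂ) (δ : ℝ) (hδ : 0 < δ) (hz : δ ≤ z.im) (u : ℝ) :
    ‖(z - (u:ℂ))⁻¹‖ ≤ δ⁻¹ := by
  rw [norm_inv]
  apply inv_anti₀ hδ
  calc δ ≤ z.im := hz
    _ ≤ |(z - (u:ℂ)).im| := by
        rw [Complex.sub_im, Complex.ofReal_im, sub_zero]; exact le_abs_self _
    _ ≤ ‖z - (u:ℂ)‖ := Complex.abs_im_le_norm _

lemma ker_lip (z : ℂ) (δ : ℝ) (hδ : 0 < δ) (hz : δ ≤ z.im) (u v : ℝ) :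
    ‖(z - (u:ℂ))⁻¹ - (z - (v:ℂ))⁻¹‖ ≤ |u - v| * (δ⁻¹ * δ⁻¹) := by
  have h1 := zsub_ne z δ hδ hz u
  have h2 := zsub_ne z δ hδ hz v
  have key : (z - (u:ℂ))⁻¹ - (z - (v:ℂ))⁻¹ = ((u:ℂ) - v) * ((z - u)⁻¹ * (z - v)⁻¹) := by
    field_simp
    ring
  rw [key, norm_mul, norm_mul]
  have hu : ‖((u:ℂ) - v)‖ = |u - v| := by
    rw [← Complex.ofReal_sub, Complex.norm_real, Real.norm_eq_abs]
  rw [hu]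
  gcongr
  · exact ker_bound z δ hδ hz u
  · exact ker_bound z δ hδ hz v

lemma driver_eq (N : ℕ) (hN : N ≠ 0) (T : ℝ) (hT : 0 < T)
    (lam Vf : Fin N → ℝ → ℝ) (m i0 : ℕ) (hm : 0 < m) (k : Fin N) (s : ℝ)
    (hlam0 : ∀ j : Fin N, 0 ≤ lam j ((↑(i0 + 1) : ℝ) * T / m))
    (hs_ub : s ≤ (↑(i0 + 1) : ℝ) * T / m)
    (hleft : (i0 : ℝ) * T / m
        + T / m * ∑ j ∈ Finset.univ.filter (fun j : Fin N => (j : ℕ) < (k : ℕ)),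
            lam j ((↑(i0 + 1) : ℝ) * T / m) < s)
    (hright : s ≤ (i0 : ℝ) * T / m
        + T / m * ∑ j ∈ Finset.univ.filter (fun j : Fin N => (j : ℕ) < (k : ℕ) + 1),
            lam j ((↑(i0 + 1) : ℝ) * T / m)) :
    switchDriver N hN T lam Vf m s = Vf k s := by
  have hm' : (0 : ℝ) < m := by exact_mod_cast hm
  have hTm : (0 : ℝ) < T / m := div_pos hT hm'
  have hs_lb : (i0 : ℝ) * T / m < s := by
    refine lt_of_le_of_lt ?_ hleft
    have : (0:ℝ) ≤ T / m * ∑ j ∈ Finset.univ.filter (fun j : Fin N => (j : ℕ) < (k : ℕ)),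
        lam j ((↑(i0 + 1) : ℝ) * T / m) :=
      mul_nonneg hTm.le (Finset.sum_nonneg fun j _ => hlam0 j)
    linarith
  have hceil : max (Nat.ceil (s * m / T)) 1 = i0 + 1 := by
    have h1 : Nat.ceil (s * m / T) = i0 + 1 := by
      rw [Nat.ceil_eq_iff (Nat.succ_ne_zero i0)]
      constructor
      · show ((i0 + 1 - 1 : ℕ) : ℝ) < s * m / T
        simp only [Nat.add_sub_cancel]
        rw [lt_div_iff₀ hT]
        have := hs_lb
        rw [div_lt_iff₀ hm'] at this
        linarith [this]
      · rw [div_le_iff₀ hT]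
        have := hs_ub
        rw [le_div_iff₀ hm'] at this
        push_cast
        push_cast at this
        linarith
    rw [h1]
    omega
  have hfil : ∀ kk : Fin N,
      Finset.univ.filter (fun j : Fin N => j ≤ kk)
        = Finset.univ.filter (fun j : Fin N => (j : ℕ) < (kk : ℕ) + 1) := by
    intro kk
    ext j
    simp only [Finset.mem_filter, Finset.mem_univ, true_and, Fin.le_def, Nat.lt_succ_iff]
  simp only [switchDriver]
  rw [hceil]
  have hcast1 : ((↑(i0 + 1) : ℝ) - 1) = (i0 : ℝ) := by push_cast; ring
  rw [hcast1]
  set ti : ℝ := (↑(i0 + 1) : ℝ) * T / m with hti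
  set S : Finset (Fin N) := Finset.univ.filter
    (fun kk : Fin N => s - (i0 : ℝ) * T / m ≤ T / m * ∑ j ∈ Finset.univ.filter (fun j => j ≤ kk), lam j ti) with hS
  have hkS : k ∈ S := by
    rw [hS, Finset.mem_filter]
    refine ⟨Finset.mem_univ _, ?_⟩
    rw [hfil k]
    linarith
  have hne : S.Nonempty := ⟨k, hkS⟩
  rw [dif_pos hne]
  congr 1
  refine le_antisymm (Finset.min'_le S k hkS) (Finset.le_min' S hne k ?_)
  intro j hj
  by_contra hjk
  push_neg at hjk
  rw [hS, Finset.mem_filter] at hj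
  have hj2 := hj.2
  rw [hfil j] at hj2
  have hsub : Finset.univ.filter (fun l : Fin N => (l : ℕ) < (j : ℕ) + 1)
      ⊆ Finset.univ.filter (fun l : Fin N => (l : ℕ) < (k : ℕ)) := by
    intro l hl
    simp only [Finset.mem_filter, Finset.mem_univ, true_and] at hl ⊢
    have : (j : ℕ) < (k : ℕ) := hjk
    omega
  have hmono : ∑ l ∈ Finset.univ.filter (fun l : Fin N => (l : ℕ) < (j : ℕ) + 1), lam l ti
      ≤ ∑ l ∈ Finset.univ.filter (fun l : Fin N => (l : ℕ) < (k : ℕ)), lam l ti :=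
    Finset.sum_le_sum_of_subset_of_nonneg hsub (fun l _ _ => hlam0 l)
  have : s - (i0 : ℝ) * T / m ≤ T / m * ∑ l ∈ Finset.univ.filter (fun l : Fin N => (l : ℕ) < (k : ℕ)), lam l ti := by
    refine le_trans hj2 ?_
    exact mul_le_mul_of_nonneg_left hmono hTm.le
  linarith

lemma interval_key (N : ℕ) (hN : N ≠ 0) (T : ℝ) (hT : 0 < T)
    (lam Vf : Fin N → ℝ → ℝ)
    (hlam_cont : ∀ k, ContinuousOn (lam k) (Set.Icc 0 T))
    (hlam_mem : ∀ k, ∀ s ∈ Set.Icc (0 : ℝ) T, lam k s ∈ Set.Icc (0 : ℝ) 1)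
    (hlam_sum : ∀ s ∈ Set.Icc (0 : ℝ) T, ∑ k, lam k s = 1)
    (hV_cont : ∀ k, ContinuousOn (Vf k) (Set.Icc 0 T))
    (m i0 : ℕ) (hm : 0 < m) (hi : i0 + 1 ≤ m)
    (z : ℂ) (δ : ℝ) (hδ : 0 < δ) (hz : δ ≤ z.im)
    (εl εv : ℝ)
    (hεl : ∀ k : Fin N, ∀ s ∈ Set.Icc ((i0:ℝ)*T/m) ((↑(i0+1):ℝ)*T/m),
      |lam k s - lam k ((↑(i0+1):ℝ)*T/m)| ≤ εl)
    (hεv : ∀ k : Fin N, ∀ s ∈ Set.Icc ((i0:ℝ)*T/m) ((↑(i0+1):ℝ)*T/m),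
      |Vf k s - Vf k ((↑(i0+1):ℝ)*T/m)| ≤ εv) :
    IntervalIntegrable (fun s => (z - (switchDriver N hN T lam Vf m s : ℝ))⁻¹) volume
      ((i0:ℝ)*T/m) ((↑(i0+1):ℝ)*T/m)
    ∧ ‖(∫ s in ((i0:ℝ)*T/m)..((↑(i0+1):ℝ)*T/m),
        ((z - (switchDriver N hN T lam Vf m s : ℝ))⁻¹
          - ∑ k, ((lam k s : ℝ) : ℂ) / (z - (Vf k s : ℝ))))‖
      ≤ T/m * ((N:ℝ) * εl * δ⁻¹ + ((N:ℝ)+1) * εv * (δ⁻¹*δ⁻¹)) := by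
  have hm' : (0 : ℝ) < m := by exact_mod_cast hm
  have hTm : (0 : ℝ) < T / m := div_pos hT hm'
  set a : ℝ := (i0:ℝ)*T/m with ha_def
  set ti : ℝ := (↑(i0+1):ℝ)*T/m with hti_def
  have hati : ti = a + T/m := by rw [hti_def, ha_def]; push_cast; ring
  have ha0 : 0 ≤ a := by positivity
  have hatile : a ≤ ti := by rw [hati]; linarith
  have htiT : ti ≤ T := by
    rw [hti_def, div_le_iff₀ hm']
    have : ((i0:ℝ)+1) ≤ (m:ℝ) := by exact_mod_cast hi
    push_cast
    nlinarith
  have hIcc : Set.Icc a ti ⊆ Set.Icc 0 T := Set.Icc_subset_Icc ha0 htiT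
  have hti_mem : ti ∈ Set.Icc (0:ℝ) T := ⟨le_trans ha0 hatile, htiT⟩
  -- the partial-sum sequence
  set lam' : ℕ → ℝ := fun q => if hq : q < N then lam ⟨q,hq⟩ ti else 0 with hlam'_def
  have hlam'0 : ∀ q, 0 ≤ lam' q := by
    intro q
    by_cases hq : q < N
    · simp only [hlam'_def, dif_pos hq]; exact (hlam_mem _ ti hti_mem).1
    · simp only [hlam'_def, dif_neg hq]
      exact le_refl 0
  have hlam'1 : ∀ q, lam' q ≤ 1 := by
    intro q
    by_cases hq : q < N
    · simp only [hlam'_def, dif_pos hq]; exact (hlam_mem _ ti hti_mem).2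
    · simp only [hlam'_def, dif_neg hq]; norm_num
  have bridge : ∀ p : ℕ, ∑ q ∈ Finset.range p, lam' q
      = ∑ j ∈ Finset.univ.filter (fun j : Fin N => (j:ℕ) < p), lam j ti := by
    intro p
    induction p with
    | zero =>
      rw [Finset.range_zero, Finset.sum_empty]
      rw [Finset.sum_eq_zero]
      intro j hj
      simp only [Finset.mem_filter] at hj
      omega
    | succ p ih =>
      rw [Finset.sum_range_succ, ih]
      by_cases hp : p < N
      · have hins : Finset.univ.filter (fun j : Fin N => (j:ℕ) < p + 1)
            = insert (⟨p, hp⟩ : Fin N) (Finset.univ.filter (fun j : Fin N => (j:ℕ) < p)) := by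
          ext j
          simp only [Finset.mem_filter, Finset.mem_univ, true_and, Finset.mem_insert, Fin.ext_iff]
          omega
        rw [hins, Finset.sum_insert (by simp)]
        simp only [hlam'_def, dif_pos hp]
        ring
      · have heq : Finset.univ.filter (fun j : Fin N => (j:ℕ) < p + 1)
            = Finset.univ.filter (fun j : Fin N => (j:ℕ) < p) := by
          ext j
          simp only [Finset.mem_filter, Finset.mem_univ, true_and]
          have := j.isLt
          omega
        rw [heq]
        simp only [hlam'_def, dif_neg hp, add_zero]
  have hsumN : ∑ q ∈ Finset.range N, lam' q = 1 := by
    rw [bridge N]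
    have hall : Finset.univ.filter (fun j : Fin N => (j:ℕ) < N) = Finset.univ := by
      ext j; simp [j.isLt]
    rw [hall]
    exact hlam_sum ti hti_mem
  set c : ℕ → ℝ := fun p => a + (T/m) * ∑ q ∈ Finset.range p, lam' q with hc_def
  have hc0 : c 0 = a := by simp [hc_def]
  have hcN : c N = ti := by rw [hc_def]; simp only [hsumN]; rw [hati]; ring
  have hcstep : ∀ p, c (p+1) = c p + (T/m) * lam' p := by
    intro p
    rw [hc_def]
    simp only [Finset.sum_range_succ]
    ring
  have hcmono : Monotone c := by
    apply monotone_nat_of_le_succ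
    intro p
    rw [hcstep p]
    nlinarith [hlam'0 p]
  have hc_lb : ∀ p, a ≤ c p := by
    intro p
    rw [← hc0]; exact hcmono (Nat.zero_le p)
  have hc_ub : ∀ p, p ≤ N → c p ≤ ti := by
    intro p hp
    rw [← hcN]; exact hcmono hp
  -- driver value on pieces
  have hdrv : ∀ p (hp : p < N), ∀ s ∈ Set.Ioc (c p) (c (p+1)),
      switchDriver N hN T lam Vf m s = Vf ⟨p,hp⟩ s := by
    intro p hp s hs
    apply driver_eq N hN T hT lam Vf m i0 hm ⟨p,hp⟩ s
    · intro j; exact (hlam_mem j ti hti_mem).1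
    · exact le_trans hs.2 (hc_ub (p+1) hp)
    · show a + T/m * _ < s
      rw [← bridge p]
      exact hs.1
    · show s ≤ a + T/m * _
      rw [← bridge (p+1)]
      exact hs.2
  set F : ℝ → ℂ := fun s => (z - (switchDriver N hN T lam Vf m s : ℝ))⁻¹ with hF_def
  set G : Fin N → ℝ → ℂ := fun k s => (z - ((Vf k s : ℝ) : ℂ))⁻¹ with hG_def
  have hGcont : ∀ k, ContinuousOn (G k) (Set.Icc 0 T) := by
    intro k
    apply ContinuousOn.inv₀
    · exact continuousOn_const.sub (Complex.continuous_ofReal.comp_continuousOn (hV_cont k))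
    · intro s _; exact zsub_ne z δ hδ hz _
  have hsubIcc : ∀ x y, x ∈ Set.Icc a ti → y ∈ Set.Icc a ti → Set.uIcc x y ⊆ Set.Icc 0 T := by
    intro x y hx hy
    apply Set.uIcc_subset_Icc (hIcc hx) (hIcc hy)
  have hcmem : ∀ p, p ≤ N → c p ∈ Set.Icc a ti := fun p hp => ⟨hc_lb p, hc_ub p hp⟩
  have hGint : ∀ k : Fin N, ∀ x y, x ∈ Set.Icc a ti → y ∈ Set.Icc a ti →
      IntervalIntegrable (G k) volume x y := by
    intro k x y hx hy
    exact ((hGcont k).mono (hsubIcc x y hx hy)).intervalIntegrable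
  have hFG : ∀ p (hp : p < N), Set.EqOn (G ⟨p,hp⟩) F (Set.Ioc (c p) (c (p+1))) := by
    intro p hp s hs
    rw [hF_def, hG_def]
    simp only
    rw [hdrv p hp s hs]
  have hFint_piece : ∀ p, p < N → IntervalIntegrable F volume (c p) (c (p+1)) := by
    intro p hp
    rw [intervalIntegrable_iff, Set.uIoc_of_le (hcmono (Nat.le_succ p))]
    have := hGint ⟨p,hp⟩ (c p) (c (p+1)) (hcmem p hp.le) (hcmem (p+1) hp)
    rw [intervalIntegrable_iff, Set.uIoc_of_le (hcmono (Nat.le_succ p))] at this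
    exact this.congr_fun (hFG p hp) measurableSet_Ioc
  have hFeq_piece : ∀ p (hp : p < N),
      (∫ s in (c p)..(c (p+1)), F s) = ∫ s in (c p)..(c (p+1)), G ⟨p,hp⟩ s := by
    intro p hp
    rw [intervalIntegral.integral_of_le (hcmono (Nat.le_succ p)),
        intervalIntegral.integral_of_le (hcmono (Nat.le_succ p))]
    exact setIntegral_congr_fun measurableSet_Ioc (fun s hs => ((hFG p hp) hs).symm)
  have hFint : IntervalIntegrable F volume a ti := by
    rw [← hc0, ← hcN]
    exact IntervalIntegrable.trans_iterate (fun p hp => hFint_piece p hp)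
  refine ⟨hFint, ?_⟩
  -- integrability of the target terms
  have hdk_cont : ∀ k : Fin N, ContinuousOn (fun s => ((lam k s : ℝ):ℂ) / (z - ((Vf k s:ℝ):ℂ)))
      (Set.Icc 0 T) := by
    intro k
    apply ContinuousOn.div
    · exact Complex.continuous_ofReal.comp_continuousOn (hlam_cont k)
    · exact continuousOn_const.sub (Complex.continuous_ofReal.comp_continuousOn (hV_cont k))
    · intro s _; exact zsub_ne z δ hδ hz _
  have hdk_int : ∀ k : Fin N, IntervalIntegrable
      (fun s => ((lam k s : ℝ):ℂ) / (z - ((Vf k s:ℝ):ℂ))) volume a ti := by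
    intro k
    exact ((hdk_cont k).mono (hsubIcc a ti (Set.left_mem_Icc.2 hatile)
      (Set.right_mem_Icc.2 hatile))).intervalIntegrable
  have hD_int : IntervalIntegrable
      (fun s => ∑ k, ((lam k s : ℝ):ℂ) / (z - ((Vf k s:ℝ):ℂ))) volume a ti := by
    exact ((continuousOn_finset_sum Finset.univ (fun k _ => hdk_cont k)).mono
      (hsubIcc a ti (Set.left_mem_Icc.2 hatile)
        (Set.right_mem_Icc.2 hatile))).intervalIntegrable
  -- split the integral
  rw [intervalIntegral.integral_sub hFint hD_int]
  rw [intervalIntegral.integral_finset_sum (fun k _ => hdk_int k)]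
  have hsplitF : (∫ s in a..ti, F s) = ∑ k : Fin N, ∫ s in (c (k:ℕ))..(c ((k:ℕ)+1)), F s := by
    rw [Fin.sum_univ_eq_sum_range (fun p => ∫ s in (c p)..(c (p+1)), F s) N]
    rw [intervalIntegral.sum_integral_adjacent_intervals hFint_piece]
    rw [hc0, hcN]
  rw [hsplitF, ← Finset.sum_sub_distrib]
  -- per-term bound
  have hεv0 : 0 ≤ εv := by
    have hk : Fin N := ⟨0, Nat.pos_of_ne_zero hN⟩
    exact le_trans (abs_nonneg _) (hεv hk ti (Set.right_mem_Icc.2 hatile))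
  have hεl0 : 0 ≤ εl := by
    have hk : Fin N := ⟨0, Nat.pos_of_ne_zero hN⟩
    exact le_trans (abs_nonneg _) (hεl hk ti (Set.right_mem_Icc.2 hatile))
  have hterm : ∀ k : Fin N,
      ‖(∫ s in (c (k:ℕ))..(c ((k:ℕ)+1)), F s)
        - ∫ s in a..ti, ((lam k s : ℝ):ℂ) / (z - ((Vf k s:ℝ):ℂ))‖
      ≤ εv * (δ⁻¹*δ⁻¹) * (c ((k:ℕ)+1) - c (k:ℕ)) + (T/m) * (εl * δ⁻¹ + εv * (δ⁻¹*δ⁻¹)) := by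
    intro k
    have hkN : (k:ℕ) < N := k.isLt
    have hkfin : (⟨(k:ℕ), hkN⟩ : Fin N) = k := by ext; rfl
    rw [hFeq_piece (k:ℕ) hkN, hkfin]
    set K : ℂ := (z - ((Vf k ti : ℝ):ℂ))⁻¹ with hK_def
    have hmid : (∫ s in (c (k:ℕ))..(c ((k:ℕ)+1)), K) = ((c ((k:ℕ)+1) - c (k:ℕ)) : ℝ) • K := by
      rw [intervalIntegral.integral_const]
    have hconstint : (∫ s in a..ti, ((lam k ti : ℝ):ℂ) * K) = ((c ((k:ℕ)+1) - c (k:ℕ)) : ℝ) • K := by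
      have hlk : lam' (k:ℕ) = lam k ti := by
        simp only [hlam'_def, dif_pos hkN, hkfin]
      have h1 : c ((k:ℕ)+1) - c (k:ℕ) = (ti - a) * lam k ti := by
        rw [hcstep (k:ℕ), hlk, hati]; ring
      rw [intervalIntegral.integral_const, h1]
      simp only [Complex.real_smul, Complex.ofReal_mul]
      ring
    have step1 : ‖(∫ s in (c (k:ℕ))..(c ((k:ℕ)+1)), G k s) - ((c ((k:ℕ)+1) - c (k:ℕ)) : ℝ) • K‖
        ≤ εv * (δ⁻¹*δ⁻¹) * (c ((k:ℕ)+1) - c (k:ℕ)) := by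
      rw [← hmid, ← intervalIntegral.integral_sub
        (hGint k _ _ (hcmem _ hkN.le) (hcmem _ hkN)) intervalIntegrable_const]
      have hb := intervalIntegral.norm_integral_le_of_norm_le_const
        (a := c (k:ℕ)) (b := c ((k:ℕ)+1)) (C := εv * (δ⁻¹*δ⁻¹))
        (f := fun s => G k s - K) ?_
      · rw [_root_.abs_of_nonneg (by linarith [hcmono (Nat.le_succ (k:ℕ))] : (0:ℝ) ≤ c ((k:ℕ)+1) - c (k:ℕ))] at hb
        exact hb
      · intro x hx
        rw [Set.uIoc_of_le (hcmono (Nat.le_succ (k:ℕ)))] at hx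
        have hxmem : x ∈ Set.Icc a ti :=
          ⟨le_trans (hc_lb _) hx.1.le, le_trans hx.2 (hc_ub _ hkN)⟩
        rw [hG_def, hK_def]
        calc ‖(z - ((Vf k x:ℝ):ℂ))⁻¹ - (z - ((Vf k ti:ℝ):ℂ))⁻¹‖
            ≤ |Vf k x - Vf k ti| * (δ⁻¹*δ⁻¹) := ker_lip z δ hδ hz _ _
          _ ≤ εv * (δ⁻¹*δ⁻¹) := by
              apply mul_le_mul_of_nonneg_right (hεv k x hxmem) (by positivity)
    have step2 : ‖((c ((k:ℕ)+1) - c (k:ℕ)) : ℝ) • K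
        - ∫ s in a..ti, ((lam k s : ℝ):ℂ) / (z - ((Vf k s:ℝ):ℂ))‖
        ≤ (T/m) * (εl * δ⁻¹ + εv * (δ⁻¹*δ⁻¹)) := by
      rw [← hconstint, ← intervalIntegral.integral_sub intervalIntegrable_const (hdk_int k)]
      have hb := intervalIntegral.norm_integral_le_of_norm_le_const
        (a := a) (b := ti) (C := εl * δ⁻¹ + εv * (δ⁻¹*δ⁻¹))
        (f := fun s => ((lam k ti : ℝ):ℂ) * K - ((lam k s : ℝ):ℂ) / (z - ((Vf k s:ℝ):ℂ))) ?_
      · calc _ ≤ (εl * δ⁻¹ + εv * (δ⁻¹*δ⁻¹)) * |ti - a| := hb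
          _ = (T/m) * (εl * δ⁻¹ + εv * (δ⁻¹*δ⁻¹)) := by
              rw [_root_.abs_of_nonneg (by linarith : (0:ℝ) ≤ ti - a), hati]; ring
      · intro x hx
        rw [Set.uIoc_of_le hatile] at hx
        have hxmem : x ∈ Set.Icc a ti := ⟨hx.1.le, hx.2⟩
        have hxT : x ∈ Set.Icc (0:ℝ) T := hIcc hxmem
        simp only [hK_def, div_eq_mul_inv]
        have hsplit : ((lam k ti : ℝ):ℂ) * (z - ((Vf k ti:ℝ):ℂ))⁻¹
            - ((lam k x : ℝ):ℂ) * (z - ((Vf k x:ℝ):ℂ))⁻¹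
            = (((lam k ti : ℝ):ℂ) - ((lam k x : ℝ):ℂ)) * (z - ((Vf k ti:ℝ):ℂ))⁻¹
              + ((lam k x : ℝ):ℂ) * ((z - ((Vf k ti:ℝ):ℂ))⁻¹ - (z - ((Vf k x:ℝ):ℂ))⁻¹) := by
          ring
        rw [hsplit]
        calc ‖_ + _‖ ≤ ‖(((lam k ti : ℝ):ℂ) - ((lam k x : ℝ):ℂ)) * (z - ((Vf k ti:ℝ):ℂ))⁻¹‖
              + ‖((lam k x : ℝ):ℂ) * ((z - ((Vf k ti:ℝ):ℂ))⁻¹ - (z - ((Vf k x:ℝ):ℂ))⁻¹)‖ :=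
            norm_add_le _ _
          _ ≤ εl * δ⁻¹ + εv * (δ⁻¹*δ⁻¹) := by
            apply add_le_add
            · rw [norm_mul]
              have h1 : ‖(((lam k ti : ℝ):ℂ) - ((lam k x : ℝ):ℂ))‖ ≤ εl := by
                rw [← Complex.ofReal_sub, Complex.norm_real, Real.norm_eq_abs, abs_sub_comm]
                exact hεl k x hxmem
              exact mul_le_mul h1 (ker_bound z δ hδ hz _) (norm_nonneg _) hεl0
            · rw [norm_mul]
              have h1 : ‖((lam k x : ℝ):ℂ)‖ ≤ 1 := by
                rw [Complex.norm_real, Real.norm_eq_abs, _root_.abs_of_nonneg (hlam_mem k x hxT).1]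
                exact (hlam_mem k x hxT).2
              have h2 : ‖(z - ((Vf k ti:ℝ):ℂ))⁻¹ - (z - ((Vf k x:ℝ):ℂ))⁻¹‖
                  ≤ εv * (δ⁻¹*δ⁻¹) := by
                calc _ ≤ |Vf k ti - Vf k x| * (δ⁻¹*δ⁻¹) := ker_lip z δ hδ hz _ _
                  _ ≤ εv * (δ⁻¹*δ⁻¹) := by
                    rw [abs_sub_comm]
                    exact mul_le_mul_of_nonneg_right (hεv k x hxmem) (by positivity)
              calc ‖((lam k x : ℝ):ℂ)‖ * ‖_‖ ≤ 1 * (εv * (δ⁻¹*δ⁻¹)) :=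
                  mul_le_mul h1 h2 (norm_nonneg _) zero_le_one
                _ = εv * (δ⁻¹*δ⁻¹) := one_mul _
    calc ‖(∫ s in (c (k:ℕ))..(c ((k:ℕ)+1)), G k s)
          - ∫ s in a..ti, ((lam k s : ℝ):ℂ) / (z - ((Vf k s:ℝ):ℂ))‖
        = ‖((∫ s in (c (k:ℕ))..(c ((k:ℕ)+1)), G k s) - ((c ((k:ℕ)+1) - c (k:ℕ)) : ℝ) • K)
        + (((c ((k:ℕ)+1) - c (k:ℕ)) : ℝ) • K
          - ∫ s in a..ti, ((lam k s : ℝ):ℂ) / (z - ((Vf k s:ℝ):ℂ)))‖ := by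
          rw [sub_add_sub_cancel]
      _ ≤ _ := norm_add_le _ _
      _ ≤ _ := add_le_add step1 step2
  calc ‖∑ k : Fin N, ((∫ s in (c (k:ℕ))..(c ((k:ℕ)+1)), F s)
        - ∫ s in a..ti, ((lam k s : ℝ):ℂ) / (z - ((Vf k s:ℝ):ℂ)))‖
      ≤ ∑ k : Fin N, ‖(∫ s in (c (k:ℕ))..(c ((k:ℕ)+1)), F s)
        - ∫ s in a..ti, ((lam k s : ℝ):ℂ) / (z - ((Vf k s:ℝ):ℂ))‖ := norm_sum_le _ _
    _ ≤ ∑ k : Fin N, (εv * (δ⁻¹*δ⁻¹) * (c ((k:ℕ)+1) - c (k:ℕ))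
        + (T/m) * (εl * δ⁻¹ + εv * (δ⁻¹*δ⁻¹))) := Finset.sum_le_sum (fun k _ => hterm k)
    _ = εv * (δ⁻¹*δ⁻¹) * (T/m) + (N:ℝ) * ((T/m) * (εl * δ⁻¹ + εv * (δ⁻¹*δ⁻¹))) := by
        rw [Finset.sum_add_distrib, Finset.sum_const, Finset.card_univ, Fintype.card_fin]
        rw [← Finset.mul_sum]
        have htel : ∑ k : Fin N, (c ((k:ℕ)+1) - c (k:ℕ)) = T/m := by
          rw [Fin.sum_univ_eq_sum_range (fun p => c (p+1) - c p) N]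
          rw [Finset.sum_range_sub c N, hc0, hcN, hati]
          ring
        rw [htel, nsmul_eq_mul]
    _ = T/m * ((N:ℝ) * εl * δ⁻¹ + ((N:ℝ)+1) * εv * (δ⁻¹*δ⁻¹)) := by ring

/-- Piecewise-constant approximation of the multi-slit Herglotz vector field:
with `λ_k : [0,T] → [0,1]` continuous summing to `1` and `V_k : [0,T] → [0,M]`
continuous, for every `t ∈ [0,T]`,
`∫₀ᵗ 1/(z - U_m(s)) ds → ∫₀ᵗ Σ_k λ_k(s)/(z - V_k(s)) ds`
locally uniformly in `z ∈ ℍ` as `m → ∞`. -/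
theorem multislit_piecewise_approximation
    (N : ℕ) (hN : N ≠ 0) (T M : ℝ) (hT : 0 < T) (hM : 0 ≤ M)
    (lam : Fin N → ℝ → ℝ) (Vf : Fin N → ℝ → ℝ)
    (hlam_cont : ∀ k, ContinuousOn (lam k) (Set.Icc 0 T))
    (hlam_mem : ∀ k, ∀ s ∈ Set.Icc (0 : ℝ) T, lam k s ∈ Set.Icc (0 : ℝ) 1)
    (hlam_sum : ∀ s ∈ Set.Icc (0 : ℝ) T, ∑ k, lam k s = 1)
    (hV_cont : ∀ k, ContinuousOn (Vf k) (Set.Icc 0 T))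
    (hV_mem : ∀ k, ∀ s ∈ Set.Icc (0 : ℝ) T, Vf k s ∈ Set.Icc 0 M) :
    ∀ t ∈ Set.Icc (0 : ℝ) T,
      TendstoLocallyUniformlyOn
        (fun (m : ℕ) (z : ℂ) =>
          ∫ s in (0 : ℝ)..t, ((z - (switchDriver N hN T lam Vf m s : ℝ))⁻¹ : ℂ))
        (fun z : ℂ =>
          ∫ s in (0 : ℝ)..t, ∑ k, ((lam k s : ℝ) : ℂ) / (z - (Vf k s : ℝ)))
        Filter.atTop {z : ℂ | 0 < z.im} := by
  intro t ht
  have hHopen : IsOpen {z : ℂ | 0 < z.im} := by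
    have h0 : {z : ℂ | 0 < z.im} = Complex.im ⁻¹' Set.Ioi 0 := rfl
    rw [h0]
    exact isOpen_Ioi.preimage Complex.continuous_im
  rw [tendstoLocallyUniformlyOn_iff_forall_isCompact hHopen]
  intro K hKsub hKc
  rcases K.eq_empty_or_nonempty with hKe | hKne
  · rw [hKe]; exact tendstoUniformlyOn_empty
  obtain ⟨z0, hz0K, hz0min⟩ := hKc.exists_isMinOn hKne Complex.continuous_im.continuousOn
  set δ : ℝ := z0.im with hδdef
  have hδ : 0 < δ := hKsub hz0K
  have hzim : ∀ z ∈ K, δ ≤ z.im := fun z hz => hz0min hz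
  have hδinv : 0 < δ⁻¹ := by positivity
  rw [Metric.tendstoUniformlyOn_iff]
  intro ε hε
  set Φ : ℝ → (Fin N → ℝ) × (Fin N → ℝ) :=
    fun s => (fun k => lam k s, fun k => Vf k s) with hΦdef
  have hΦc : ContinuousOn Φ (Set.Icc 0 T) :=
    ContinuousOn.prodMk (continuousOn_pi.2 hlam_cont) (continuousOn_pi.2 hV_cont)
  set C1 : ℝ := (N:ℝ) * δ⁻¹ + ((N:ℝ)+1) * (δ⁻¹*δ⁻¹) with hC1def
  have hC1pos : 0 < C1 := by positivity
  set ε' : ℝ := ε / (2 * (T * C1 + 1)) with hε'def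
  have hε' : 0 < ε' := by positivity
  obtain ⟨η, hη, hηUC⟩ := Metric.uniformContinuousOn_iff.1
    (isCompact_Icc.uniformContinuousOn_of_continuous hΦc) ε' hε'
  have hmod : ∀ x ∈ Set.Icc (0:ℝ) T, ∀ y ∈ Set.Icc (0:ℝ) T, |x - y| < η →
      (∀ k, |lam k x - lam k y| ≤ ε') ∧ (∀ k, |Vf k x - Vf k y| ≤ ε') := by
    intro x hx y hy hxy
    have hd := hηUC x hx y hy (by rwa [Real.dist_eq])
    constructor
    · intro k
      have h1 : dist (lam k x) (lam k y) ≤ dist (Φ x).1 (Φ y).1 :=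
        dist_le_pi_dist (Φ x).1 (Φ y).1 k
      have h2 : dist (Φ x).1 (Φ y).1 ≤ dist (Φ x) (Φ y) := by
        rw [Prod.dist_eq]; exact le_max_left _ _
      rw [Real.dist_eq] at h1
      exact le_trans h1 (le_trans h2 hd.le)
    · intro k
      have h1 : dist (Vf k x) (Vf k y) ≤ dist (Φ x).2 (Φ y).2 :=
        dist_le_pi_dist (Φ x).2 (Φ y).2 k
      have h2 : dist (Φ x).2 (Φ y).2 ≤ dist (Φ x) (Φ y) := by
        rw [Prod.dist_eq]; exact le_max_right _ _
      rw [Real.dist_eq] at h1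
      exact le_trans h1 (le_trans h2 hd.le)
  set β : ℝ := min η (ε * δ / 8) with hβdef
  have hβ : 0 < β := lt_min hη (by positivity)
  have hβ2 : β ≤ ε * δ / 8 := min_le_right _ _
  obtain ⟨m1, hm1⟩ := exists_nat_gt (T / β)
  refine Filter.eventually_atTop.2 ⟨max m1 1, ?_⟩
  intro m hmge z hzK
  have hm : 0 < m := le_trans (le_max_right m1 1) hmge
  have hm' : (0:ℝ) < m := by exact_mod_cast hm
  have hm1m : (m1:ℝ) ≤ m := by exact_mod_cast le_trans (le_max_left m1 1) hmge
  have hTm : T / m < β := by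
    rw [div_lt_iff₀ hm']
    have h1 : T / β < m1 := hm1
    rw [div_lt_iff₀ hβ] at h1
    nlinarith
  have hTmpos : 0 < T / m := div_pos hT hm'
  have hz : δ ≤ z.im := hzim z hzK
  show dist (∫ s in (0:ℝ)..t, ∑ k, ((lam k s : ℝ) : ℂ) / (z - (Vf k s : ℝ)))
    (∫ s in (0:ℝ)..t, ((z - (switchDriver N hN T lam Vf m s : ℝ))⁻¹ : ℂ)) < ε
  set F : ℝ → ℂ := fun s => ((z - (switchDriver N hN T lam Vf m s : ℝ))⁻¹ : ℂ) with hFdef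
  set D : ℝ → ℂ := fun s => ∑ k, ((lam k s : ℝ) : ℂ) / (z - (Vf k s : ℝ)) with hDdef
  set n : ℕ := Nat.floor (t * m / T) with hndef
  have ht0 : 0 ≤ t := ht.1
  have htT : t ≤ T := ht.2
  have hn_le : (n:ℝ) ≤ t * m / T := Nat.floor_le (by positivity)
  have hn_lt : t * m / T < (n:ℝ) + 1 := by exact_mod_cast Nat.lt_floor_add_one (t * m / T)
  have hnm : n ≤ m := by
    have h1 : t * m / T ≤ ((m:ℕ):ℝ) := by
      rw [div_le_iff₀ hT]; nlinarith
    have h2 := Nat.floor_le_floor h1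
    rwa [Nat.floor_natCast] at h2
  have hnm' : (n:ℝ) ≤ (m:ℝ) := by exact_mod_cast hnm
  have hbn_le_t : (n:ℝ) * T / m ≤ t := by
    rw [div_le_iff₀ hm']
    rw [le_div_iff₀ hT] at hn_le
    nlinarith
  have ht_lt : t < ((n:ℝ)+1) * T / m := by
    rw [lt_div_iff₀ hm']
    rw [div_lt_iff₀ hT] at hn_lt
    nlinarith
  have hD_cont : ContinuousOn D (Set.Icc 0 T) := by
    apply continuousOn_finset_sum
    intro k _
    apply ContinuousOn.div
    · exact Complex.continuous_ofReal.comp_continuousOn (hlam_cont k)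
    · exact continuousOn_const.sub (Complex.continuous_ofReal.comp_continuousOn (hV_cont k))
    · intro s _; exact zsub_ne z δ hδ hz _
  have hD_int : ∀ x y : ℝ, x ∈ Set.Icc (0:ℝ) T → y ∈ Set.Icc (0:ℝ) T →
      IntervalIntegrable D volume x y := fun x y hx hy =>
    (hD_cont.mono (Set.uIcc_subset_Icc hx hy)).intervalIntegrable
  have hβη : β ≤ η := min_le_left _ _
  have hkey : ∀ i : ℕ, i + 1 ≤ m →
      IntervalIntegrable F volume ((i:ℝ)*T/m) ((↑(i+1):ℝ)*T/m)
      ∧ ‖(∫ s in ((i:ℝ)*T/m)..((↑(i+1):ℝ)*T/m), (F s - D s))‖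
        ≤ T/m * ((N:ℝ) * ε' * δ⁻¹ + ((N:ℝ)+1) * ε' * (δ⁻¹*δ⁻¹)) := by
    intro i hi
    have hi' : ((i:ℝ)+1) ≤ (m:ℝ) := by exact_mod_cast hi
    have hti_cast : (↑(i+1):ℝ) = (i:ℝ) + 1 := by push_cast; ring
    have hti_le : (↑(i+1):ℝ)*T/m ≤ T := by
      rw [hti_cast, div_le_iff₀ hm']; nlinarith
    have hti_mem : (↑(i+1):ℝ)*T/m ∈ Set.Icc (0:ℝ) T := ⟨by positivity, hti_le⟩
    have ha_le : (i:ℝ)*T/m ≤ (↑(i+1):ℝ)*T/m := by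
      rw [hti_cast, div_le_div_iff₀ hm' hm']; nlinarith
    have hIcc_sub : Set.Icc ((i:ℝ)*T/m) ((↑(i+1):ℝ)*T/m) ⊆ Set.Icc (0:ℝ) T :=
      Set.Icc_subset_Icc (by positivity) hti_le
    have hdist : ∀ s ∈ Set.Icc ((i:ℝ)*T/m) ((↑(i+1):ℝ)*T/m), |s - (↑(i+1):ℝ)*T/m| < η := by
      intro s hs
      rw [abs_sub_comm, _root_.abs_of_nonneg (sub_nonneg.2 hs.2)]
      have h3 : (↑(i+1):ℝ)*T/m - (i:ℝ)*T/m = T/m := by rw [hti_cast]; ring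
      have h4 : (↑(i+1):ℝ)*T/m - s ≤ T/m := by
        have := hs.1; linarith [h3]
      exact lt_of_le_of_lt h4 (lt_of_lt_of_le hTm hβη)
    exact interval_key N hN T hT lam Vf hlam_cont hlam_mem hlam_sum hV_cont m i hm hi z δ hδ hz
      ε' ε'
      (fun k s hs => (hmod s (hIcc_sub hs) _ hti_mem (hdist s hs)).1 k)
      (fun k s hs => (hmod s (hIcc_sub hs) _ hti_mem (hdist s hs)).2 k)
  set b : ℕ → ℝ := fun i => (i:ℝ) * T / m with hbdef
  have hb0 : b 0 = 0 := by simp [hbdef]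
  have hbmem : ∀ i : ℕ, i ≤ m → b i ∈ Set.Icc (0:ℝ) T := by
    intro i hi
    have hi' : (i:ℝ) ≤ (m:ℝ) := by exact_mod_cast hi
    refine ⟨by positivity, ?_⟩
    rw [hbdef]
    simp only
    rw [div_le_iff₀ hm']; nlinarith
  have hfi : ∀ i, i < n → IntervalIntegrable (fun s => F s - D s) volume (b i) (b (i+1)) := by
    intro i hi
    have hi1 : i + 1 ≤ m := le_trans (Nat.succ_le_of_lt hi) hnm
    exact ((hkey i hi1).1).sub (hD_int _ _ (hbmem i (by omega)) (hbmem (i+1) hi1))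
  have hFi : ∀ i, i < n → IntervalIntegrable F volume (b i) (b (i+1)) := by
    intro i hi
    exact (hkey i (le_trans (Nat.succ_le_of_lt hi) hnm)).1
  have hF0n : IntervalIntegrable F volume (b 0) (b n) :=
    IntervalIntegrable.trans_iterate hFi
  have hf0n : IntervalIntegrable (fun s => F s - D s) volume (b 0) (b n) :=
    IntervalIntegrable.trans_iterate hfi
  have hsum_eq : ∑ i ∈ Finset.range n, (∫ s in (b i)..(b (i+1)), (F s - D s))
      = ∫ s in (b 0)..(b n), (F s - D s) :=
    intervalIntegral.sum_integral_adjacent_intervals hfi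
  have hbn_le_t' : b n ≤ t := hbn_le_t
  have hbn_mem : b n ∈ Set.Icc (0:ℝ) T := hbmem n hnm
  have hFtail : IntervalIntegrable F volume (b n) t := by
    rcases lt_or_eq_of_le hnm with hlt | heq
    · have h1 := (hkey n hlt).1
      apply h1.mono_set
      have hle : b n ≤ b (n+1) := by
        show (n:ℝ)*T/m ≤ (↑(n+1):ℝ)*T/m
        rw [div_le_div_iff₀ hm' hm']
        push_cast
        nlinarith [mul_nonneg hT.le hm'.le]
      apply Set.uIcc_subset_uIcc Set.left_mem_uIcc
      rw [Set.uIcc_of_le hle]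
      refine ⟨hbn_le_t', ?_⟩
      have h11 : (↑(n+1):ℝ) = (n:ℝ) + 1 := by push_cast; ring
      show t ≤ (↑(n+1):ℝ)*T/m
      rw [h11]
      exact ht_lt.le
    · have hbnT : b n = T := by
        rw [hbdef]
        simp only
        rw [heq]
        field_simp
      have htbn : t = b n := le_antisymm (by rw [hbnT]; exact htT) hbn_le_t'
      rw [htbn]
  have hftail : IntervalIntegrable (fun s => F s - D s) volume (b n) t :=
    hFtail.sub (hD_int _ _ hbn_mem ht)
  have hF0t : IntervalIntegrable F volume 0 t := by
    have h1 := hF0n.trans hFtail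
    rwa [hb0] at h1
  have hD0t : IntervalIntegrable D volume 0 t :=
    hD_int 0 t (Set.left_mem_Icc.2 hT.le) ht
  have hDbound : ∀ x ∈ Set.Icc (0:ℝ) T, ‖D x‖ ≤ δ⁻¹ := by
    intro x hx
    rw [hDdef]
    calc ‖∑ k, ((lam k x : ℝ) : ℂ) / (z - (Vf k x : ℝ))‖
        ≤ ∑ k, ‖((lam k x : ℝ) : ℂ) / (z - (Vf k x : ℝ))‖ := norm_sum_le _ _
      _ ≤ ∑ k, lam k x * δ⁻¹ := by
          apply Finset.sum_le_sum
          intro k _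
          rw [div_eq_mul_inv, norm_mul, Complex.norm_real, Real.norm_eq_abs,
            _root_.abs_of_nonneg (hlam_mem k x hx).1]
          exact mul_le_mul_of_nonneg_left (ker_bound z δ hδ hz _) (hlam_mem k x hx).1
      _ = δ⁻¹ := by rw [← Finset.sum_mul, hlam_sum x hx, one_mul]
  have h2tail : ‖∫ s in (b n)..t, (F s - D s)‖ ≤ (2*δ⁻¹) * (T/m) := by
    have hb2 := intervalIntegral.norm_integral_le_of_norm_le_const
      (a := b n) (b := t) (C := 2*δ⁻¹) (f := fun s => F s - D s) ?_
    · calc ‖∫ s in (b n)..t, (F s - D s)‖ ≤ 2*δ⁻¹ * |t - b n| := hb2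
        _ ≤ (2*δ⁻¹) * (T/m) := by
            apply mul_le_mul_of_nonneg_left _ (by positivity)
            rw [_root_.abs_of_nonneg (sub_nonneg.2 hbn_le_t')]
            have : b n = (n:ℝ)*T/m := rfl
            rw [this]
            have h5 : t < (n:ℝ)*T/m + T/m := by
              have h6 : ((n:ℝ)+1)*T/m = (n:ℝ)*T/m + T/m := by ring
              rw [← h6]; exact ht_lt
            linarith
    · intro x hx
      rw [Set.uIoc_of_le hbn_le_t'] at hx
      have hx0T : x ∈ Set.Icc (0:ℝ) T := ⟨le_trans hbn_mem.1 hx.1.le, le_trans hx.2 htT⟩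
      calc ‖F x - D x‖ ≤ ‖F x‖ + ‖D x‖ := norm_sub_le _ _
        _ ≤ δ⁻¹ + δ⁻¹ := add_le_add (ker_bound z δ hδ hz _) (hDbound x hx0T)
        _ = 2*δ⁻¹ := by ring
  have h1main : ‖∫ s in (b 0)..(b n), (F s - D s)‖ ≤ (n:ℝ) * ((T/m) * (ε' * C1)) := by
    rw [← hsum_eq]
    calc ‖∑ i ∈ Finset.range n, (∫ s in (b i)..(b (i+1)), (F s - D s))‖
        ≤ ∑ i ∈ Finset.range n, ‖∫ s in (b i)..(b (i+1)), (F s - D s)‖ := norm_sum_le _ _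
      _ ≤ (Finset.range n).card • ((T/m) * (ε' * C1)) := by
          apply Finset.sum_le_card_nsmul
          intro i hi
          rw [Finset.mem_range] at hi
          have hi1 : i + 1 ≤ m := le_trans (Nat.succ_le_of_lt hi) hnm
          calc ‖∫ s in (b i)..(b (i+1)), (F s - D s)‖
              ≤ T/m * ((N:ℝ) * ε' * δ⁻¹ + ((N:ℝ)+1) * ε' * (δ⁻¹*δ⁻¹)) := (hkey i hi1).2
            _ = (T/m) * (ε' * C1) := by rw [hC1def]; ring
      _ = (n:ℝ) * ((T/m) * (ε' * C1)) := by
          rw [Finset.card_range, nsmul_eq_mul]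
  -- final numeric estimate
  clear_value ε' C1 β δ
  have hnTm : (n:ℝ) * (T/m) ≤ T := by
    have h7 : (m:ℝ) * (T/m) = T := by field_simp
    nlinarith
  have e1 : (n:ℝ) * ((T/m) * (ε' * C1)) ≤ T * (ε' * C1) := by
    have h8 : 0 ≤ ε' * C1 := by positivity
    nlinarith [mul_le_mul_of_nonneg_right hnTm h8]
  have e2 : T * (ε' * C1) ≤ ε/2 := by
    have h9 : ε' * (2 * (T * C1 + 1)) = ε := by
      rw [hε'def]; field_simp
    have h12 : ε' * (2 * (T * C1 + 1)) = 2*(ε' * (T*C1)) + 2*ε' := by ring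
    have h11 : T * (ε' * C1) = ε' * (T*C1) := by ring
    linarith
  have e3 : (2*δ⁻¹) * (T/m) < ε/2 := by
    have h14 := mul_lt_mul_of_pos_left hTm (show (0:ℝ) < 2*δ⁻¹ by positivity)
    have h15 := mul_le_mul_of_nonneg_left hβ2 (show (0:ℝ) ≤ 2*δ⁻¹ by positivity)
    have h13 : 2*δ⁻¹*(ε * δ / 8) = ε/4 := by
      field_simp
      ring
    linarith
  rw [dist_eq_norm]
  calc ‖(∫ s in (0:ℝ)..t, D s) - ∫ s in (0:ℝ)..t, F s‖
      = ‖(∫ s in (0:ℝ)..t, F s) - ∫ s in (0:ℝ)..t, D s‖ := norm_sub_rev _ _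
    _ = ‖∫ s in (0:ℝ)..t, (F s - D s)‖ := by
        rw [intervalIntegral.integral_sub hF0t hD0t]
    _ = ‖(∫ s in (b 0)..(b n), (F s - D s)) + ∫ s in (b n)..t, (F s - D s)‖ := by
        rw [show (0:ℝ) = b 0 from hb0.symm,
          ← intervalIntegral.integral_add_adjacent_intervals hf0n hftail]
    _ ≤ ‖∫ s in (b 0)..(b n), (F s - D s)‖ + ‖∫ s in (b n)..t, (F s - D s)‖ := norm_add_le _ _
    _ < ε := by linarith
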